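/- Let a, b, c, d ∈ ℂ with ad − bc ≠ 0, let Ω ⊆ ℂ be an open set on which ct + d ≠ 0, and let λ(t) = (at+b)/(ct+d), so λ'(t) = (ad−bc)/(ct+d)². Let q₀ : Ω → ℂ be analytic, and let Q₀ be an analytic function on λ(Ω) satisfying Q₀(λ(t)) = q₀(t)·(ct+d)⁸/(ad−bc)⁴ for all t ∈ Ω. Then for all t ∈ Ω: 8·Q₀(λ(t))·Q₀''(λ(t)) − 9·(Q₀'(λ(t)))² = ((ct+d)²⁰/(ad−bc)¹⁰)·(8·q₀(t)·q₀''(t) − 9·(q₀'(t))²). (That is, 𝓡 := 8q₀q₀'' − 9(q₀')² is a relative invariant of weight 10: it transforms as 𝓡̃ = 𝓡/(λ')¹⁰.) -/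

import Mathlib

open Complex

private lemma hasDerivAt_lin (c d t : ℂ) : HasDerivAt (fun s : ℂ => c * s + d) c t := by
  simpa using ((hasDerivAt_id t).const_mul c).add_const d

/-- Derivative of the Möbius map. -/
private lemma hasDerivAt_lam (a b c d : ℂ)
    (lam : ℂ → ℂ) (hlam : ∀ t, lam t = (a * t + b) / (c * t + d))
    (t : ℂ) (ht : c * t + d ≠ 0) :
    HasDerivAt lam ((a * d - b * c) / (c * t + d) ^ 2) t := by
  have hfun : lam = fun s => (a * s + b) / (c * s + d) := funext hlam
  rw [hfun]
  have h : HasDerivAt (fun s => (a * s + b) / (c * s + d))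
      ((a * (c * t + d) - (a * t + b) * c) / (c * t + d) ^ 2) t :=
    (hasDerivAt_lin a b t).div (hasDerivAt_lin c d t) ht
  convert h using 1
  ring

/-- `𝓡 := 8q₀q₀'' − 9(q₀')²` is a relative invariant of weight 10: under the Möbius change
of variable `T = λ(t) = (at+b)/(ct+d)` it transforms as `𝓡̃ = 𝓡/(λ')¹⁰`, i.e.
`8·Q₀·Q₀'' − 9·(Q₀')²` at `λ(t)` equals `((ct+d)²⁰/(ad−bc)¹⁰)·(8·q₀·q₀'' − 9·(q₀')²)` at `t`. -/
theorem R_relative_invariant_weight_ten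
    (a b c d : ℂ) (had : a * d - b * c ≠ 0)
    (Ω : Set ℂ) (hΩ : IsOpen Ω) (hcd : ∀ t ∈ Ω, c * t + d ≠ 0)
    (lam : ℂ → ℂ) (hlam : ∀ t, lam t = (a * t + b) / (c * t + d))
    (q₀ : ℂ → ℂ) (hq₀ : AnalyticOnNhd ℂ q₀ Ω)
    (Q₀ : ℂ → ℂ) (hQ₀an : AnalyticOnNhd ℂ Q₀ (lam '' Ω))
    (hQ₀ : ∀ t ∈ Ω, Q₀ (lam t) = q₀ t * (c * t + d) ^ 8 / (a * d - b * c) ^ 4) :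
    ∀ t ∈ Ω,
      8 * Q₀ (lam t) * iteratedDeriv 2 Q₀ (lam t) - 9 * (deriv Q₀ (lam t)) ^ 2 =
        ((c * t + d) ^ 20 / (a * d - b * c) ^ 10) *
          (8 * q₀ t * iteratedDeriv 2 q₀ t - 9 * (deriv q₀ t) ^ 2) := by
  set K := a * d - b * c with hK
  -- First: formula for deriv Q₀ ∘ lam on Ω.
  have key1 : ∀ t ∈ Ω, deriv Q₀ (lam t) =
      (deriv q₀ t * (c * t + d) ^ 10 + 8 * c * q₀ t * (c * t + d) ^ 9) / K ^ 5 := by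
    intro t ht
    have hu := hcd t ht
    have hlamD := hasDerivAt_lam a b c d lam hlam t hu
    have hQd : DifferentiableAt ℂ Q₀ (lam t) :=
      (hQ₀an (lam t) ⟨t, ht, rfl⟩).differentiableAt
    have hchain : HasDerivAt (fun s => Q₀ (lam s))
        (deriv Q₀ (lam t) * (K / (c * t + d) ^ 2)) t := by
      simpa [Function.comp_def, hK] using (hQd.hasDerivAt).comp t hlamD
    have hqd := (hq₀ t ht).differentiableAt.hasDerivAt
    have hg := (hqd.mul ((hasDerivAt_lin c d t).pow 8)).div_const (K ^ 4)
    have heq : (fun s => Q₀ (lam s)) =ᶠ[nhds t] fun s => q₀ s * (c * s + d) ^ 8 / K ^ 4 := by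
      filter_upwards [hΩ.mem_nhds ht] with s hs using hQ₀ s hs
    have huniq := hchain.unique (hg.congr_of_eventuallyEq heq)
    norm_num at huniq
    set u := c * t + d with hu'
    field_simp at huniq ⊢
    linear_combination huniq
  -- Second: formula for iteratedDeriv 2 Q₀ ∘ lam on Ω.
  have key2 : ∀ t ∈ Ω, iteratedDeriv 2 Q₀ (lam t) =
      (iteratedDeriv 2 q₀ t * (c * t + d) ^ 12 + 18 * c * deriv q₀ t * (c * t + d) ^ 11
        + 72 * c ^ 2 * q₀ t * (c * t + d) ^ 10) / K ^ 6 := by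
    intro t ht
    have hu := hcd t ht
    have hlamD := hasDerivAt_lam a b c d lam hlam t hu
    have hQd2 : DifferentiableAt ℂ (deriv Q₀) (lam t) :=
      ((hQ₀an.deriv) (lam t) ⟨t, ht, rfl⟩).differentiableAt
    have hchain : HasDerivAt (fun s => deriv Q₀ (lam s))
        (deriv (deriv Q₀) (lam t) * (K / (c * t + d) ^ 2)) t := by
      simpa [Function.comp_def, hK] using (hQd2.hasDerivAt).comp t hlamD
    have hqd := ((hq₀.deriv) t ht).differentiableAt.hasDerivAt
    have hqd0 := (hq₀ t ht).differentiableAt.hasDerivAt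
    have hg := ((hqd.mul ((hasDerivAt_lin c d t).pow 10)).add
      ((hqd0.const_mul (8 * c)).mul ((hasDerivAt_lin c d t).pow 9))).div_const (K ^ 5)
    have heq : (fun s => deriv Q₀ (lam s)) =ᶠ[nhds t]
        fun s => (deriv q₀ s * (c * s + d) ^ 10 + 8 * c * q₀ s * (c * s + d) ^ 9) / K ^ 5 := by
      filter_upwards [hΩ.mem_nhds ht] with s hs using key1 s hs
    have huniq := hchain.unique (hg.congr_of_eventuallyEq heq)
    have h2q : deriv (deriv q₀) t = iteratedDeriv 2 q₀ t := by
      rw [iteratedDeriv_succ, iteratedDeriv_one]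
    have h2Q : deriv (deriv Q₀) (lam t) = iteratedDeriv 2 Q₀ (lam t) := by
      rw [iteratedDeriv_succ, iteratedDeriv_one]
    rw [h2q, h2Q] at huniq
    norm_num at huniq
    set u := c * t + d with hu'
    field_simp at huniq ⊢
    linear_combination huniq
  intro t ht
  have hu := hcd t ht
  rw [hQ₀ t ht, key1 t ht, key2 t ht]
  set u := c * t + d with hu'
  field_simp
  ring
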